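/- Let B = B(0,1) be the open unit ball in Euclidean ℝ³. Let u : B → ℝ be C² and square-integrable on B, and let f : B → ℝ be continuous with Δu = −f on B and f ≥ 0 on B. Then for every r ∈ (0,1) there is a constant c = c(r), independent of u and f, such that ∫_{B(0,r)} f ≤ c·(∫_B u²)^{1/2}. -/

import Mathlib

open MeasureTheory Metric

/-- The Euclidean Laplacian of `u : ℝ³ → ℝ`, as the sum of the pure second
partial derivatives in the coordinate directions. -/
noncomputable def lap (u : EuclideanSpace ℝ (Fin 3) → ℝ)
    (x : EuclideanSpace ℝ (Fin 3)) : ℝ :=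
  ∑ i : Fin 3,
    fderiv ℝ (fun y => fderiv ℝ u y (EuclideanSpace.single i (1 : ℝ))) x
      (EuclideanSpace.single i (1 : ℝ))

local notation "E3" => EuclideanSpace ℝ (Fin 3)

lemma glue_cont {h : E3 → ℝ} {ρ : ℝ} (hρ : ρ < 1)
    (h1 : ∀ x ∈ ball (0:E3) 1, ContinuousAt h x)
    (h0 : ∀ x ∉ closedBall (0:E3) ρ, h x = 0) : Continuous h := by
  rw [continuous_iff_continuousAt]
  intro x
  by_cases hx : x ∈ ball (0:E3) 1
  · exact h1 x hx
  · have hxc : x ∈ (closedBall (0:E3) ρ)ᶜ := by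
      simp only [mem_ball, mem_closedBall, not_lt, Set.mem_compl_iff] at *
      linarith
    have heq : h =ᶠ[nhds x] fun _ => 0 :=
      Filter.eventually_of_mem (Metric.isClosed_closedBall.isOpen_compl.mem_nhds hxc)
        (fun y hy => h0 y hy)
    exact ContinuousAt.congr continuousAt_const heq.symm

lemma glue_diff {h g : E3 → ℝ} {ρ : ℝ} (hρ : ρ < 1)
    (heq : ∀ x ∈ ball (0:E3) 1, h x = g x)
    (hg : ∀ x ∈ ball (0:E3) 1, DifferentiableAt ℝ g x)
    (h0 : ∀ x ∉ closedBall (0:E3) ρ, h x = 0) :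
    Differentiable ℝ h ∧ (∀ x ∈ ball (0:E3) 1, fderiv ℝ h x = fderiv ℝ g x) ∧
      (∀ x ∉ closedBall (0:E3) ρ, fderiv ℝ h x = 0) := by
  have hball : ∀ x ∈ ball (0:E3) 1, h =ᶠ[nhds x] g := fun x hx =>
    Filter.eventually_of_mem (isOpen_ball.mem_nhds hx) (fun y hy => heq y hy)
  have hout : ∀ x ∉ closedBall (0:E3) ρ, h =ᶠ[nhds x] fun _ => (0:ℝ) := by
    intro x hx
    exact Filter.eventually_of_mem (Metric.isClosed_closedBall.isOpen_compl.mem_nhds hx)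
      (fun y hy => h0 y hy)
  refine ⟨?_, ?_, ?_⟩
  · intro x
    by_cases hx : x ∈ ball (0:E3) 1
    · exact ((hball x hx).differentiableAt_iff).2 (hg x hx)
    · have hxc : x ∉ closedBall (0:E3) ρ := by
        simp only [mem_ball, mem_closedBall, not_lt] at *
        linarith
      exact ((hout x hxc).differentiableAt_iff).2 (differentiableAt_const 0)
  · intro x hx
    exact (hball x hx).fderiv_eq
  · intro x hx
    rw [(hout x hx).fderiv_eq, fderiv_fun_const]
    rfl

/-- L¹ control of a nonnegative right-hand side: if `u` is `C²` and square-integrable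
on the unit ball `B ⊂ ℝ³`, `f` is continuous with `Δu = −f` and `f ≥ 0` on `B`, then
for every `r ∈ (0,1)` there is `c = c(r)`, independent of `u` and `f`, with
`∫_{B(0,r)} f ≤ c·(∫_B u²)^{1/2}`. -/
theorem laplacian_L1_bound_by_L2_potential
    (r : ℝ) (hr : r ∈ Set.Ioo (0 : ℝ) 1) :
    ∃ c : ℝ, ∀ u f : EuclideanSpace ℝ (Fin 3) → ℝ,
      ContDiffOn ℝ 2 u (ball 0 1) →
      IntegrableOn (fun x => (u x) ^ 2) (ball 0 1) volume →
      ContinuousOn f (ball 0 1) →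
      (∀ x ∈ ball (0 : EuclideanSpace ℝ (Fin 3)) 1, lap u x = - f x) →
      (∀ x ∈ ball (0 : EuclideanSpace ℝ (Fin 3)) 1, 0 ≤ f x) →
      (∫ x in ball (0 : EuclideanSpace ℝ (Fin 3)) r, f x) ≤
        c * Real.sqrt (∫ x in ball (0 : EuclideanSpace ℝ (Fin 3)) 1, (u x) ^ 2) := by
  obtain ⟨hr0, hr1⟩ := hr
  set R : ℝ := (1 + r) / 2 with hR
  set R2 : ℝ := (1 + R) / 2 with hR2
  set R3 : ℝ := (1 + R2) / 2 with hR3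
  have hrR : r < R := by rw [hR]; linarith
  have hRR2 : R < R2 := by rw [hR2]; linarith [hrR, hr1, (by rw [hR]; linarith : R < 1)]
  have hR1 : R < 1 := by rw [hR]; linarith
  have hR21 : R2 < 1 := by rw [hR2]; linarith
  have hR2R3 : R2 < R3 := by rw [hR3]; linarith
  have hR31 : R3 < 1 := by rw [hR3]; linarith
  have hR20 : 0 < R2 := by rw [hR2]; linarith
  -- bump functions
  set η : ContDiffBump (0 : E3) := ⟨r, R, hr0, hrR⟩ with hη
  set χ : ContDiffBump (0 : E3) := ⟨R2, R3, hR20, hR2R3⟩ with hχ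
  set v : Fin 3 → E3 := fun i => EuclideanSpace.single i (1 : ℝ) with hv
  set η1 : Fin 3 → E3 → ℝ := fun i x => fderiv ℝ (⇑η) x (v i) with hη1def
  set η2 : Fin 3 → E3 → ℝ := fun i x => fderiv ℝ (η1 i) x (v i) with hη2def
  set L : E3 → ℝ := fun x => ∑ i : Fin 3, η2 i x with hLdef
  -- smoothness of the bump derivatives
  have hη1cd : ∀ i, ContDiff ℝ (⊤:ℕ∞) (η1 i) := fun i =>
    ((η.contDiff (n := (⊤:ℕ∞))).fderiv_right (m := (⊤:ℕ∞)) (by simp)).clm_apply contDiff_const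
  have hη2cd : ∀ i, ContDiff ℝ (⊤:ℕ∞) (η2 i) := fun i =>
    ((hη1cd i).fderiv_right (m := (⊤:ℕ∞)) (by simp)).clm_apply contDiff_const
  -- vanishing of η and its derivatives outside closedBall R
  have hηz : ∀ x ∉ closedBall (0:E3) R, η x = 0 := by
    intro x hx
    exact η.zero_of_le_dist (le_of_lt (by simpa [mem_closedBall, not_le] using hx))
  have hη1z : ∀ i, ∀ x ∉ closedBall (0:E3) R, η1 i x = 0 := by
    intro i x hx
    have : (⇑η) =ᶠ[nhds x] fun _ => (0:ℝ) :=
      Filter.eventually_of_mem (Metric.isClosed_closedBall.isOpen_compl.mem_nhds hx)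
        (fun y hy => hηz y hy)
    rw [hη1def]
    simp only
    rw [this.fderiv_eq, fderiv_fun_const]
    rfl
  have hη2z : ∀ i, ∀ x ∉ closedBall (0:E3) R, η2 i x = 0 := by
    intro i x hx
    have : (η1 i) =ᶠ[nhds x] fun _ => (0:ℝ) :=
      Filter.eventually_of_mem (Metric.isClosed_closedBall.isOpen_compl.mem_nhds hx)
        (fun y hy => hη1z i y hy)
    rw [hη2def]
    simp only
    rw [this.fderiv_eq, fderiv_fun_const]
    rfl
  have hLz : ∀ x ∉ closedBall (0:E3) R, L x = 0 := by
    intro x hx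
    rw [hLdef]
    simp only
    exact Finset.sum_eq_zero fun i _ => hη2z i x hx
  have hLcont : Continuous L := continuous_finset_sum _ fun i _ => (hη2cd i).continuous
  have hLcs : HasCompactSupport L := HasCompactSupport.intro (isCompact_closedBall (0:E3) R) hLz
  obtain ⟨M, hM⟩ := hLcs.exists_bound_of_continuous hLcont
  have hM0 : 0 ≤ M := le_trans (norm_nonneg _) (hM 0)
  refine ⟨M * Real.sqrt ((volume (ball (0:E3) 1)).toReal), ?_⟩
  intro u f hu hu2 hf hlap hfpos
  set g0 : E3 → ℝ := fun x => χ x * u x with hg0def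
  set U : E3 → ℝ := (ball (0:E3) 1).indicator g0 with hUdef
  have hg0cd : ContDiffOn ℝ 2 g0 (ball (0:E3) 1) :=
    (χ.contDiff.contDiffOn (n := 2)).mul hu
  have hU1 : ∀ x ∈ ball (0:E3) 1, U x = g0 x := fun x hx => Set.indicator_of_mem hx _
  have hUz : ∀ x ∉ closedBall (0:E3) R3, U x = 0 := by
    intro x hx
    by_cases h : x ∈ ball (0:E3) 1
    · rw [hU1 x h, hg0def]
      simp only
      rw [χ.zero_of_le_dist (le_of_lt (by simpa [mem_closedBall, not_le] using hx)), zero_mul]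
    · exact Set.indicator_of_notMem h _
  have hg0diff : ∀ x ∈ ball (0:E3) 1, DifferentiableAt ℝ g0 x := fun x hx =>
    (hg0cd.differentiableOn (by norm_num)).differentiableAt (isOpen_ball.mem_nhds hx)
  obtain ⟨hUdiff, hUfd, hUfdz⟩ := glue_diff hR31 hU1 hg0diff hUz
  -- first derivatives
  set U1 : Fin 3 → E3 → ℝ := fun i x => fderiv ℝ U x (v i) with hU1def
  set g1 : Fin 3 → E3 → ℝ := fun i x => fderiv ℝ g0 x (v i) with hg1def
  have hg1cd : ∀ i, ContDiffOn ℝ 1 (g1 i) (ball (0:E3) 1) := fun i =>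
    (hg0cd.fderiv_of_isOpen isOpen_ball (by norm_num)).clm_apply contDiffOn_const
  have hU1eq : ∀ i, ∀ x ∈ ball (0:E3) 1, U1 i x = g1 i x := fun i x hx => by
    rw [hU1def]; simp only; rw [hUfd x hx]
  have hU1z : ∀ i, ∀ x ∉ closedBall (0:E3) R3, U1 i x = 0 := fun i x hx => by
    rw [hU1def]; simp only; rw [hUfdz x hx]; rfl
  have hg1diff : ∀ i, ∀ x ∈ ball (0:E3) 1, DifferentiableAt ℝ (g1 i) x := fun i x hx =>
    ((hg1cd i).differentiableOn one_ne_zero).differentiableAt (isOpen_ball.mem_nhds hx)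
  have hglue1 := fun i => glue_diff hR31 (hU1eq i) (hg1diff i) (hU1z i)
  have hU1diff : ∀ i, Differentiable ℝ (U1 i) := fun i => (hglue1 i).1
  have hU1fd : ∀ i, ∀ x ∈ ball (0:E3) 1, fderiv ℝ (U1 i) x = fderiv ℝ (g1 i) x :=
    fun i => (hglue1 i).2.1
  have hU1fdz : ∀ i, ∀ x ∉ closedBall (0:E3) R3, fderiv ℝ (U1 i) x = 0 :=
    fun i => (hglue1 i).2.2
  -- second derivatives
  set U2 : Fin 3 → E3 → ℝ := fun i x => fderiv ℝ (U1 i) x (v i) with hU2def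
  set g2 : Fin 3 → E3 → ℝ := fun i x => fderiv ℝ (g1 i) x (v i) with hg2def
  have hg2cont : ∀ i, ContinuousOn (g2 i) (ball (0:E3) 1) := fun i => by
    have := ((hg1cd i).fderiv_of_isOpen isOpen_ball (m := 0) (by norm_num)).clm_apply
      (contDiffOn_const (c := v i))
    exact (contDiffOn_zero.mp this)
  have hU2eq : ∀ i, ∀ x ∈ ball (0:E3) 1, U2 i x = g2 i x := fun i x hx => by
    rw [hU2def]; simp only; rw [hU1fd i x hx]
  have hU2z : ∀ i, ∀ x ∉ closedBall (0:E3) R3, U2 i x = 0 := fun i x hx => by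
    rw [hU2def]; simp only; rw [hU1fdz i x hx]; rfl
  -- continuity of U, U1, U2-products
  have hUcont : Continuous U := by
    apply glue_cont hR31 _ hUz
    intro x hx
    have h1 : ContinuousAt g0 x :=
      ((hg0cd.continuousOn x hx).continuousAt (isOpen_ball.mem_nhds hx))
    exact h1.congr (Filter.eventually_of_mem (isOpen_ball.mem_nhds hx)
      (fun y hy => (hU1 y hy).symm))
  have hU1cont : ∀ i, Continuous (U1 i) := by
    intro i
    apply glue_cont hR31 _ (hU1z i)
    intro x hx
    have h1 : ContinuousAt (g1 i) x :=
      (((hg1cd i).continuousOn) x hx).continuousAt (isOpen_ball.mem_nhds hx)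
    exact h1.congr (Filter.eventually_of_mem (isOpen_ball.mem_nhds hx)
      (fun y hy => (hU1eq i y hy).symm))
  have hU2contAt : ∀ i, ∀ x ∈ ball (0:E3) 1, ContinuousAt (U2 i) x := by
    intro i x hx
    have h1 : ContinuousAt (g2 i) x :=
      ((hg2cont i) x hx).continuousAt (isOpen_ball.mem_nhds hx)
    exact h1.congr (Filter.eventually_of_mem (isOpen_ball.mem_nhds hx)
      (fun y hy => (hU2eq i y hy).symm))
  -- integrability helper
  have integ : ∀ {h : E3 → ℝ}, Continuous h → (∀ x ∉ closedBall (0:E3) R3, h x = 0) →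
      Integrable h volume := fun hc hz =>
    hc.integrable_of_hasCompactSupport (HasCompactSupport.intro (isCompact_closedBall _ _) hz)
  have hRR3 : R < R3 := lt_trans hRR2 hR2R3
  have notinR : ∀ x, x ∉ closedBall (0:E3) R3 → x ∉ closedBall (0:E3) R := fun x hx h =>
    hx (closedBall_subset_closedBall hRR3.le h)
  have int_η1U1 : ∀ i, Integrable (fun x => η1 i x * U1 i x) volume := fun i =>
    integ ((hη1cd i).continuous.mul (hU1cont i))
      (fun x hx => by rw [hU1z i x hx, mul_zero])
  have int_ηU2 : ∀ i, Integrable (fun x => η x * U2 i x) volume := fun i =>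
    integ (glue_cont hR31
        (fun x hx => (η.continuous.continuousAt).mul (hU2contAt i x hx))
        (fun x hx => by rw [hU2z i x hx, mul_zero]))
      (fun x hx => by rw [hU2z i x hx, mul_zero])
  have int_ηU1 : ∀ i, Integrable (fun x => η x * U1 i x) volume := fun i =>
    integ (η.continuous.mul (hU1cont i)) (fun x hx => by rw [hU1z i x hx, mul_zero])
  have int_η2U : ∀ i, Integrable (fun x => η2 i x * U x) volume := fun i =>
    integ ((hη2cd i).continuous.mul hUcont) (fun x hx => by rw [hUz x hx, mul_zero])
  have int_η1U : ∀ i, Integrable (fun x => η1 i x * U x) volume := fun i =>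
    integ ((hη1cd i).continuous.mul hUcont) (fun x hx => by rw [hUz x hx, mul_zero])
  -- integration by parts, twice
  have ibp1 : ∀ i, ∫ x, η x * U2 i x = -∫ x, η1 i x * U1 i x := by
    intro i
    simp only [hU2def, hη1def]
    exact integral_mul_fderiv_eq_neg_fderiv_mul_of_integrable
      (by simpa only [hη1def] using int_η1U1 i)
      (by simpa only [hU2def] using int_ηU2 i)
      (int_ηU1 i)
      (fun x _ => ((η.contDiff (n := (⊤:ℕ∞))).differentiable (by simp)) x) (fun x _ => hU1diff i x)
  have ibp2 : ∀ i, ∫ x, η1 i x * U1 i x = -∫ x, η2 i x * U x := by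
    intro i
    simp only [hU1def, hη2def]
    exact integral_mul_fderiv_eq_neg_fderiv_mul_of_integrable
      (by simpa only [hη2def] using int_η2U i)
      (by simpa only [hU1def] using int_η1U1 i)
      (int_η1U i)
      (fun x _ => ((hη1cd i).differentiable (by simp)) x) (fun x _ => hUdiff x)
  have key : ∀ i, ∫ x, η x * U2 i x = ∫ x, η2 i x * U x := fun i => by
    rw [ibp1 i, ibp2 i, neg_neg]
  set F : E3 → ℝ := (ball (0:E3) 1).indicator f with hFdef
  have hFz : ∀ x ∉ closedBall (0:E3) R3, η x * F x = 0 := fun x hx => by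
    rw [hηz x (notinR x hx), zero_mul]
  have hηFint : Integrable (fun x => η x * F x) volume := by
    refine integ (glue_cont hR31 ?_ hFz) hFz
    intro x hx
    have h1 : ContinuousAt f x := (hf x hx).continuousAt (isOpen_ball.mem_nhds hx)
    have h2 : ContinuousAt F x := h1.congr
      (Filter.eventually_of_mem (isOpen_ball.mem_nhds hx)
        (fun y hy => (Set.indicator_of_mem hy f).symm))
    exact η.continuous.continuousAt.mul h2
  have step1 : ∫ x in ball (0:E3) r, f x = ∫ x in ball (0:E3) r, η x * F x := by
    refine setIntegral_congr_fun measurableSet_ball ?_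
    intro x hx
    have h1 : η x = 1 := η.one_of_mem_closedBall (ball_subset_closedBall hx)
    have h2 : F x = f x := Set.indicator_of_mem (ball_subset_ball hr1.le hx) f
    show f x = η x * F x
    rw [h1, h2, one_mul]
  have step2 : ∫ x in ball (0:E3) r, η x * F x ≤ ∫ x, η x * F x :=
    setIntegral_le_integral hηFint (Filter.Eventually.of_forall fun x =>
      mul_nonneg η.nonneg (Set.indicator_nonneg (fun y hy => hfpos y hy) x))
  -- pointwise identity
  have hpt : ∀ x, η x * F x = ∑ i : Fin 3, -(η x * U2 i x) := by
    intro x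
    by_cases hx : x ∈ ball (0:E3) R2
    · have hx1 : x ∈ ball (0:E3) 1 := ball_subset_ball hR21.le hx
      have hUloc : ∀ y ∈ ball (0:E3) R2, U y = u y := by
        intro y hy
        rw [hU1 y (ball_subset_ball hR21.le hy), hg0def]
        simp only
        rw [χ.one_of_mem_closedBall (ball_subset_closedBall hy), one_mul]
      have hU1loc : ∀ i, ∀ y ∈ ball (0:E3) R2, U1 i y = fderiv ℝ u y (v i) := by
        intro i y hy
        have heq : U =ᶠ[nhds y] u :=
          Filter.eventually_of_mem (isOpen_ball.mem_nhds hy) hUloc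
        rw [hU1def]; simp only; rw [heq.fderiv_eq]
      have hU2loc : ∀ i, U2 i x = fderiv ℝ (fun y => fderiv ℝ u y (v i)) x (v i) := by
        intro i
        have heq : U1 i =ᶠ[nhds x] fun y => fderiv ℝ u y (v i) :=
          Filter.eventually_of_mem (isOpen_ball.mem_nhds hx) (hU1loc i)
        rw [hU2def]; simp only; rw [heq.fderiv_eq]
      have hsum : ∑ i : Fin 3, U2 i x = lap u x := by
        simp only [hU2loc, hv, lap]
      have hFx : F x = f x := Set.indicator_of_mem hx1 f
      rw [hFx]
      have : ∑ i : Fin 3, -(η x * U2 i x) = -(η x * ∑ i : Fin 3, U2 i x) := by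
        rw [Finset.mul_sum, ← Finset.sum_neg_distrib]
      rw [this, hsum, hlap x hx1]
      ring
    · have hηx : η x = 0 := by
        refine η.zero_of_le_dist (le_of_lt ?_)
        have : ¬ dist x (0:E3) < R2 := by simpa [mem_ball] using hx
        linarith [not_lt.mp this]
      simp [hηx]
  -- combine
  have step3 : ∫ x, η x * F x = -∫ x, L x * U x := by
    calc ∫ x, η x * F x = ∫ x, ∑ i : Fin 3, -(η x * U2 i x) := by
          exact integral_congr_ae (Filter.Eventually.of_forall hpt)
      _ = ∑ i : Fin 3, ∫ x, -(η x * U2 i x) :=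
          integral_finset_sum _ (fun i _ => (int_ηU2 i).neg)
      _ = ∑ i : Fin 3, -(∫ x, η2 i x * U x) := by
          refine Finset.sum_congr rfl fun i _ => ?_
          rw [integral_neg, key i]
      _ = -∑ i : Fin 3, ∫ x, η2 i x * U x := by rw [← Finset.sum_neg_distrib]
      _ = -∫ x, ∑ i : Fin 3, η2 i x * U x :=
          congrArg Neg.neg (integral_finset_sum _ (fun i _ => int_η2U i)).symm
      _ = -∫ x, L x * U x := by
          refine congrArg Neg.neg (integral_congr_ae (Filter.Eventually.of_forall fun x => ?_))
          rw [hLdef]; simp only; rw [Finset.sum_mul]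
  -- integrability of u on the ball
  haveI hfin : IsFiniteMeasure (volume.restrict (ball (0:E3) 1)) :=
    ⟨by rw [Measure.restrict_apply_univ]; exact measure_ball_lt_top⟩
  have hmeas : AEStronglyMeasurable u (volume.restrict (ball (0:E3) 1)) :=
    (hu.continuousOn).aestronglyMeasurable measurableSet_ball
  have hmem2 : MemLp u 2 (volume.restrict (ball (0:E3) 1)) :=
    (memLp_two_iff_integrable_sq hmeas).2 hu2
  have hint1 : IntegrableOn u (ball (0:E3) 1) volume :=
    hmem2.integrable (by norm_num)
  -- bound by M * ∫ |u|
  have hIntLU : Integrable (fun x => L x * U x) volume :=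
    integ (hLcont.mul hUcont) (fun x hx => by rw [hUz x hx, mul_zero])
  have hindint : Integrable ((ball (0:E3) 1).indicator fun y => |u y|) volume := by
    rw [integrable_indicator_iff measurableSet_ball]
    exact hint1.abs
  have hptbd : ∀ x, |L x * U x| ≤ M * (ball (0:E3) 1).indicator (fun y => |u y|) x := by
    intro x
    by_cases hx : x ∈ ball (0:E3) 1
    · rw [Set.indicator_of_mem hx, abs_mul]
      have h1 : |L x| ≤ M := by simpa [Real.norm_eq_abs] using hM x
      have h2 : |U x| ≤ |u x| := by
        rw [hU1 x hx, hg0def]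
        simp only
        rw [abs_mul]
        exact mul_le_of_le_one_left (abs_nonneg _)
          (by rw [abs_of_nonneg χ.nonneg]; exact χ.le_one)
      exact mul_le_mul h1 h2 (abs_nonneg _) hM0
    · have hx3 : x ∉ closedBall (0:E3) R3 := by
        simp only [mem_ball, mem_closedBall, not_lt, not_le] at *
        linarith
      rw [Set.indicator_of_notMem hx, hUz x hx3, mul_zero, abs_zero, mul_zero]
  have step4 : -∫ x, L x * U x ≤ M * ∫ x in ball (0:E3) 1, |u x| := by
    calc -∫ x, L x * U x ≤ |∫ x, L x * U x| := neg_le_abs _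
      _ ≤ ∫ x, |L x * U x| := by
          have h := norm_integral_le_integral_norm (μ := volume) (f := fun x => L x * U x)
          simpa only [Real.norm_eq_abs] using h
      _ ≤ ∫ x, M * (ball (0:E3) 1).indicator (fun y => |u y|) x :=
          integral_mono hIntLU.abs (hindint.const_mul M) hptbd
      _ = M * ∫ x, (ball (0:E3) 1).indicator (fun y => |u y|) x := integral_const_mul M _
      _ = M * ∫ x in ball (0:E3) 1, |u x| := by rw [integral_indicator measurableSet_ball]
  -- Cauchy-Schwarz
  have step5 : ∫ x in ball (0:E3) 1, |u x| ≤
      Real.sqrt ((volume (ball (0:E3) 1)).toReal) *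
        Real.sqrt (∫ x in ball (0:E3) 1, (u x) ^ 2) := by
    have hpq : Real.HolderConjugate 2 2 := Real.holderConjugate_iff.mpr ⟨one_lt_two, by norm_num⟩
    have habsm : AEStronglyMeasurable (fun x => |u x|) (volume.restrict (ball (0:E3) 1)) := by
      simpa [Real.norm_eq_abs] using hmeas.norm
    have hmemc : MemLp (fun _ : E3 => (1:ℝ)) (ENNReal.ofReal 2)
        (volume.restrict (ball (0:E3) 1)) := memLp_const 1
    have hmemu : MemLp (fun x => |u x|) (ENNReal.ofReal 2)
        (volume.restrict (ball (0:E3) 1)) := by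
      have h2 : (ENNReal.ofReal 2) = 2 := by norm_num
      rw [h2]
      refine (memLp_two_iff_integrable_sq habsm).2 ?_
      simpa [sq_abs, IntegrableOn] using hu2
    have h := integral_mul_le_Lp_mul_Lq_of_nonneg hpq
      (Filter.Eventually.of_forall fun x => zero_le_one)
      (Filter.Eventually.of_forall fun x => abs_nonneg (u x)) hmemc hmemu
    have e1 : ∫ (a : E3) in ball 0 1, (1:ℝ) * |u a| = ∫ x in ball (0:E3) 1, |u x| := by
      simp
    have e2 : ∫ (a : E3) in ball (0:E3) 1, (1:ℝ) ^ (2:ℝ) = (volume (ball (0:E3) 1)).toReal := by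
      simp [measureReal_def]
    have e3 : ∫ (a : E3) in ball (0:E3) 1, |u a| ^ (2:ℝ) = ∫ x in ball (0:E3) 1, (u x) ^ 2 := by
      refine integral_congr_ae (Filter.Eventually.of_forall fun x => ?_)
      show |u x| ^ (2:ℝ) = u x ^ 2
      rw [show ((2:ℝ) = ((2:ℕ):ℝ)) by norm_num, Real.rpow_natCast, sq_abs]
    rw [e1, e2, e3] at h
    calc ∫ x in ball (0:E3) 1, |u x| ≤
        ((volume (ball (0:E3) 1)).toReal) ^ ((1:ℝ)/2) *
          (∫ x in ball (0:E3) 1, (u x) ^ 2) ^ ((1:ℝ)/2) := h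
      _ = _ := by rw [← Real.sqrt_eq_rpow, ← Real.sqrt_eq_rpow]
  -- final assembly
  calc ∫ x in ball (0:E3) r, f x = ∫ x in ball (0:E3) r, η x * F x := step1
    _ ≤ ∫ x, η x * F x := step2
    _ = -∫ x, L x * U x := step3
    _ ≤ M * ∫ x in ball (0:E3) 1, |u x| := step4
    _ ≤ M * (Real.sqrt ((volume (ball (0:E3) 1)).toReal) *
          Real.sqrt (∫ x in ball (0:E3) 1, (u x) ^ 2)) :=
        mul_le_mul_of_nonneg_left step5 hM0
    _ = M * Real.sqrt ((volume (ball (0:E3) 1)).toReal) *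
          Real.sqrt (∫ x in ball (0:E3) 1, (u x) ^ 2) := by ring
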